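/- Let H be the group ℝ² ⋊ ℝ with underlying set ℝ² × ℝ and multiplication (q,r;p)(q',r';p') = (q+q', r+r'+pq'; p+p'), and let K be the group with underlying set ℝ × ℝ² and multiplication (p;q,r)(p';q',r') = (p+p'; q+q', r+r'+q p'). Define (q,r;p) ▷ (p';q',r') = (p'; q', r' − q p') and (q,r;p) ◁ (p';q',r') = (q, r − q' p; p). Then ▷ is a left action of H on K, ◁ is a right action of K on H, and together they satisfy the matched pair conditions: h ▷ (k k') = (h ▷ k)((h ◁ k) ▷ k') and (h h') ◁ k = (h ◁ (h' ▷ k))(h' ◁ k) for all h, h' ∈ H and k, k' ∈ K. -/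

import Mathlib

/-- Multiplication of `H = ℝ² ⋊ ℝ`, elements written `(q, r; p)`. -/
def mulH (x y : ℝ × ℝ × ℝ) : ℝ × ℝ × ℝ :=
  (x.1 + y.1, x.2.1 + y.2.1 + x.2.2 * y.1, x.2.2 + y.2.2)

/-- Multiplication of `K`, elements written `(p; q, r)`. -/
def mulK (x y : ℝ × ℝ × ℝ) : ℝ × ℝ × ℝ :=
  (x.1 + y.1, x.2.1 + y.2.1, x.2.2 + y.2.2 + x.2.1 * y.1)

/-- The left action `(q,r;p) ▷ (p';q',r') = (p'; q', r' − q p')` of `H` on `K`. -/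
def actL (h k : ℝ × ℝ × ℝ) : ℝ × ℝ × ℝ := (k.1, k.2.1, k.2.2 - h.1 * k.1)

/-- The right action `(q,r;p) ◁ (p';q',r') = (q, r − q' p; p)` of `K` on `H`. -/
def actR (h k : ℝ × ℝ × ℝ) : ℝ × ℝ × ℝ := (h.1, h.2.1 - k.2.1 * h.2.2, h.2.2)

/-- `▷` is a left action of the group `H` on the set `K`, `◁` is a
right action of the group `K` on the set `H`, `h ▷ e = e`, `e ◁ k = e`, and the two
matched pair compatibility conditions hold. -/
theorem stmt_3 :
    (∀ k, actL (0, 0, 0) k = k) ∧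
    (∀ h h' k, actL (mulH h h') k = actL h (actL h' k)) ∧
    (∀ h, actR h (0, 0, 0) = h) ∧
    (∀ h k k', actR h (mulK k k') = actR (actR h k) k') ∧
    (∀ h, actL h (0, 0, 0) = (0, 0, 0)) ∧
    (∀ k, actR (0, 0, 0) k = (0, 0, 0)) ∧
    (∀ h k k', actL h (mulK k k') = mulK (actL h k) (actL (actR h k) k')) ∧
    (∀ h h' k, actR (mulH h h') k = mulH (actR h (actL h' k)) (actR h' k)) := by
  refine ⟨?_, ?_, ?_, ?_, ?_, ?_, ?_, ?_⟩ <;>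
    intros <;> simp only [mulH, mulK, actL, actR, Prod.ext_iff] <;>
    exact ⟨by first | trivial | ring, by first | trivial | ring, by first | trivial | ring⟩
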